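/- Let W be an n×k matrix with orthonormal columns, R an n×j matrix with W*R = 0, x a unit vector in ℂ^n, and r = Rc for some c ∈ ℂ^j. Then ‖[W r]* x‖² = ‖W* x‖² + |r* x|², and over all choices of c the quantity |r*x|²/‖r‖² is maximized by c = R⁺ x (the Moore–Penrose pseudoinverse applied to x), achieving the value ‖R R⁺ x‖². -/

import Mathlib

open Matrix

noncomputable section

/-- Euclidean norm of a complex vector. -/
def en {ι : Type*} [Fintype ι] (v : ι → ℂ) : ℝ := Real.sqrt (∑ i, ‖v i‖ ^ 2)


lemma en_eq {ι : Type*} [Fintype ι] (v : ι → ℂ) :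
    en v = ‖(WithLp.equiv 2 (ι → ℂ)).symm v‖ := by
  rw [EuclideanSpace.norm_eq, en]; rfl

lemma en_sq {ι : Type*} [Fintype ι] (v : ι → ℂ) : en v ^ 2 = ∑ i, ‖v i‖ ^ 2 := by
  rw [en, Real.sq_sqrt]; positivity

lemma en_ne_zero {ι : Type*} [Fintype ι] {v : ι → ℂ} (h : v ≠ 0) : en v ≠ 0 := by
  rw [en_eq]; simpa using h

lemma en_nonneg {ι : Type*} [Fintype ι] (v : ι → ℂ) : 0 ≤ en v := Real.sqrt_nonneg _

lemma dot_inner {ι : Type*} [Fintype ι] (v x : ι → ℂ) :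
    star v ⬝ᵥ x = @inner ℂ _ _ ((WithLp.equiv 2 (ι → ℂ)).symm v) ((WithLp.equiv 2 (ι → ℂ)).symm x) := by
  simp [dotProduct, PiLp.inner_apply, RCLike.inner_apply, mul_comm]

lemma star_mulVec_dot {m n : ℕ} (A : Matrix (Fin m) (Fin n) ℂ) (u : Fin n → ℂ) (x : Fin m → ℂ) :
    star (A.mulVec u) ⬝ᵥ x = star u ⬝ᵥ (Aᴴ.mulVec x) := by
  rw [star_mulVec, dotProduct_mulVec]

theorem stmt5 {n k j : ℕ}
    (W : Matrix (Fin n) (Fin k) ℂ) (hW : Wᴴ * W = 1)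
    (R : Matrix (Fin n) (Fin j) ℂ) (hWR : Wᴴ * R = 0)
    -- `Rp` is the Moore–Penrose pseudoinverse of `R`, characterized by the Penrose conditions:
    (Rp : Matrix (Fin j) (Fin n) ℂ)
    (hp1 : R * Rp * R = R) (hp2 : Rp * R * Rp = Rp)
    (hp3 : (R * Rp)ᴴ = R * Rp) (hp4 : (Rp * R)ᴴ = Rp * R)
    (x : Fin n → ℂ) (hx : en x = 1)
    (c : Fin j → ℂ) (r : Fin n → ℂ) (hr : r = R.mulVec c) :
    -- ‖[W r]* x‖² = ‖W* x‖² + |r* x|²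
    en ((Matrix.fromCols W (Matrix.replicateCol (Fin 1) r))ᴴ.mulVec x) ^ 2
        = en (Wᴴ.mulVec x) ^ 2 + ‖star r ⬝ᵥ x‖ ^ 2 ∧
    -- the choice c = R⁺ x maximizes |r*x|²/‖r‖², achieving the value ‖R R⁺ x‖²
    (∀ c' : Fin j → ℂ, R.mulVec c' ≠ 0 →
        ‖star (R.mulVec c') ⬝ᵥ x‖ ^ 2 / en (R.mulVec c') ^ 2
          ≤ en (R.mulVec (Rp.mulVec x)) ^ 2) ∧
    (R.mulVec (Rp.mulVec x) ≠ 0 →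
        ‖star (R.mulVec (Rp.mulVec x)) ⬝ᵥ x‖ ^ 2 / en (R.mulVec (Rp.mulVec x)) ^ 2
          = en (R.mulVec (Rp.mulVec x)) ^ 2) := by
  set P : Matrix (Fin n) (Fin n) ℂ := R * Rp with hP
  have hPR : P * R = R := hp1
  have hPP : P * P = P := by
    rw [hP, ← Matrix.mul_assoc, hp1]
  have hPx : P.mulVec x = R.mulVec (Rp.mulVec x) := by
    rw [mulVec_mulVec]
  have key : ∀ v : Fin n → ℂ, P.mulVec v = v →
      star v ⬝ᵥ x = star v ⬝ᵥ (P.mulVec x) := by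
    intro v hv
    conv_lhs => rw [← hv]
    rw [star_mulVec_dot, hp3]
  refine ⟨?_, ?_, ?_⟩
  · rw [conjTranspose_fromCols_eq_fromRows_conjTranspose, fromRows_mulVec,
      en_sq, en_sq, Fintype.sum_sum_type]
    congr 1 <;> simp [mulVec, dotProduct, Matrix.replicateRow_apply]
  · intro c' hc'
    have hv : P.mulVec (R.mulVec c') = R.mulVec c' := by
      rw [mulVec_mulVec, hPR]
    have hdot := key _ hv
    have hcs : ‖star (R.mulVec c') ⬝ᵥ x‖ ≤ en (R.mulVec c') * en (R.mulVec (Rp.mulVec x)) := by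
      rw [hdot, hPx, dot_inner, en_eq, en_eq]
      exact norm_inner_le_norm _ _
    have h0 : (0:ℝ) < en (R.mulVec c') ^ 2 :=
      pow_pos (lt_of_le_of_ne (en_nonneg _) (Ne.symm (en_ne_zero hc'))) 2
    rw [div_le_iff₀ h0]
    calc ‖star (R.mulVec c') ⬝ᵥ x‖ ^ 2
        ≤ (en (R.mulVec c') * en (R.mulVec (Rp.mulVec x))) ^ 2 := by
          apply pow_le_pow_left₀ (norm_nonneg _) hcs
      _ = en (R.mulVec (Rp.mulVec x)) ^ 2 * en (R.mulVec c') ^ 2 := by ring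
  · intro hne
    have hv : P.mulVec (R.mulVec (Rp.mulVec x)) = R.mulVec (Rp.mulVec x) := by
      rw [← hPx, mulVec_mulVec, hPP, hPx]
    have hdot := key _ hv
    rw [hPx] at hdot
    have hself : ‖star (R.mulVec (Rp.mulVec x)) ⬝ᵥ x‖ = en (R.mulVec (Rp.mulVec x)) ^ 2 := by
      rw [hdot, dot_inner, en_eq]
      rw [@inner_self_eq_norm_sq_to_K ℂ]
      simp
    rw [hself]
    have h0 : en (R.mulVec (Rp.mulVec x)) ^ 2 ≠ 0 :=
      pow_ne_zero 2 (en_ne_zero hne)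
    rw [pow_two (en (R.mulVec (Rp.mulVec x)) ^ 2), mul_div_assoc, div_self h0, mul_one]
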